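/- For a lower continuous monotone measure ν and a nondecreasing sequence of nonnegative measurable functions fₙ ↑ f pointwise, the Choquet integrals converge: lim_{n→∞} ∫ fₙ dν = ∫ f dν. -/

import Mathlib

open MeasureTheory Filter Set
open scoped NNReal ENNReal NNRat

variable {U : Type*}

/-- The Choquet integral of `f` w.r.t. the set function `ν` on the set `A`:
`∫₀^∞ ν({f ≥ t} ∩ A) dt`. -/
noncomputable def Choquet [MeasurableSpace U] (ν : Set U → ENNReal) (f : U → ENNReal)
    (A : Set U) : ENNReal :=
  ∫⁻ t in Set.Ioi (0 : ℝ), ν ({x | ENNReal.ofReal t ≤ f x} ∩ A)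

/-- A monotone measure: vanishes at `∅` and is monotone on measurable sets. -/
def IsMonotoneMeasure [MeasurableSpace U] (ν : Set U → ENNReal) : Prop :=
  ν ∅ = 0 ∧ ∀ A B : Set U, MeasurableSet A → MeasurableSet B → A ⊆ B → ν A ≤ ν B

/-- The decomposition inequalities for the ordered pair `(μ, ν)` w.r.t. a family
`A : NNRat → Set U`, stated additively (no truncated subtraction):
`α(ν(S∩A_α) − ν(S∩A_β)) ≤ μ(S∩A_α) − μ(S∩A_β) ≤ β(ν(S∩A_α) − ν(S∩A_β))`
for all measurable `S` of finite `μ`- and `ν`-measure and rationals `α < β`. -/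
def DecompIneq [MeasurableSpace U] (μ ν : Set U → ENNReal) (A : NNRat → Set U) : Prop :=
  ∀ S : Set U, MeasurableSet S → μ S ≠ ⊤ → ν S ≠ ⊤ →
    ∀ α β : NNRat, α < β →
      (((α : ℝ≥0) : ENNReal) * ν (S ∩ A α) + μ (S ∩ A β)
          ≤ μ (S ∩ A α) + ((α : ℝ≥0) : ENNReal) * ν (S ∩ A β)) ∧
      (μ (S ∩ A α) + ((β : ℝ≥0) : ENNReal) * ν (S ∩ A β)
          ≤ ((β : ℝ≥0) : ENNReal) * ν (S ∩ A α) + μ (S ∩ A β))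

/-- The decomposition property: a decreasing family of measurable sets with `A 0 = univ`
satisfying the decomposition inequalities. -/
def DecompProp [MeasurableSpace U] (μ ν : Set U → ENNReal) (A : NNRat → Set U) : Prop :=
  (∀ α, MeasurableSet (A α)) ∧ A 0 = Set.univ ∧ Antitone A ∧ DecompIneq μ ν A

/-- Comonotonicity for `ℝ≥0∞`-valued functions. -/
def Comonotone (f g : U → ENNReal) : Prop :=
  ∀ s t : U, (f s ≤ f t ∧ g s ≤ g t) ∨ (f t ≤ f s ∧ g t ≤ g s)

theorem choquet_monotone_convergence [MeasurableSpace U] (ν : Set U → ENNReal)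
    (hν : IsMonotoneMeasure ν)
    (hlc : ∀ A : ℕ → Set U, (∀ n, MeasurableSet (A n)) → Monotone A →
      Tendsto (fun n => ν (A n)) atTop (nhds (ν (⋃ n, A n))))
    (F : ℕ → U → ENNReal) (hF : ∀ n, Measurable (F n)) (hmono : Monotone F)
    (f : U → ENNReal) (hf : Measurable f)
    (hlim : ∀ x, Tendsto (fun n => F n x) atTop (nhds (f x))) :
    Tendsto (fun n => Choquet ν (F n) Set.univ) atTop
      (nhds (Choquet ν f Set.univ)) := by
  obtain ⟨hν0, hνmono⟩ := hν
  -- level sets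
  set A : ℕ → ℝ → Set U := fun n t => {x | ENNReal.ofReal t ≤ F n x} with hA
  have hAmeas : ∀ n t, MeasurableSet (A n t) := fun n t =>
    measurableSet_le measurable_const (hF n)
  have hfmeas : ∀ t : ℝ, MeasurableSet {x | ENNReal.ofReal t ≤ f x} := fun t =>
    measurableSet_le measurable_const hf
  have hfsup : ∀ x, f x = ⨆ n, F n x := fun x =>
    tendsto_nhds_unique (hlim x) (tendsto_atTop_iSup fun a b hab => hmono hab x)
  set H : ℕ → ℝ → ℝ≥0∞ := fun n t => ν (A n t) with hH
  set h : ℝ → ℝ≥0∞ := fun t => ν {x | ENNReal.ofReal t ≤ f x} with hh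
  set g : ℝ → ℝ≥0∞ := fun t => ν (⋃ n, A n t) with hg
  -- monotonicity of A in n
  have hAn : ∀ t, Monotone fun n => A n t := fun t m n hmn x hx =>
    le_trans hx (hmono hmn x)
  have hHn : ∀ t, Monotone fun n => H n t := fun t m n hmn =>
    hνmono _ _ (hAmeas m t) (hAmeas n t) (hAn t hmn)
  -- antitone in t
  have hHanti : ∀ n, Antitone (H n) := fun n s t hst =>
    hνmono _ _ (hAmeas n t) (hAmeas n s)
      (fun x hx => le_trans (ENNReal.ofReal_le_ofReal hst) hx)
  have hhanti : Antitone h := fun s t hst =>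
    hνmono _ _ (hfmeas t) (hfmeas s)
      (fun x hx => le_trans (ENNReal.ofReal_le_ofReal hst) hx)
  have hHmeas : ∀ n, Measurable (H n) := fun n => (hHanti n).measurable
  -- g is the pointwise limit (= sup) of H n
  have hgsup : ∀ t, g t = ⨆ n, H n t := fun t =>
    tendsto_nhds_unique (hlc (fun n => A n t) (fun n => hAmeas n t) (hAn t))
      (tendsto_atTop_iSup (hHn t))
  -- g ≤ h
  have hgle : ∀ t, g t ≤ h t := by
    intro t
    refine hνmono _ _ (MeasurableSet.iUnion fun n => hAmeas n t) (hfmeas t) ?_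
    rintro x hx
    simp only [mem_iUnion] at hx
    obtain ⟨n, hn⟩ := hx
    exact le_trans hn ((hfsup x) ▸ le_iSup (fun n => F n x) n)
  -- h s ≤ g t for 0 ≤ t < s
  have hkey : ∀ t s : ℝ, 0 ≤ t → t < s → h s ≤ g t := by
    intro t s ht hts
    refine hνmono _ _ (hfmeas s) (MeasurableSet.iUnion fun n => hAmeas n t) ?_
    intro x hx
    have hlt : ENNReal.ofReal t < ENNReal.ofReal s :=
      (ENNReal.ofReal_lt_ofReal_iff (lt_of_le_of_lt ht hts)).2 hts
    have : ENNReal.ofReal t < ⨆ n, F n x := lt_of_lt_of_le hlt ((hfsup x) ▸ hx)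
    obtain ⟨n, hn⟩ := lt_iSup_iff.1 this
    exact mem_iUnion.2 ⟨n, hn.le⟩
  -- a.e. equality of g and h on Ioi 0
  have hae : ∀ᵐ t ∂(volume.restrict (Ioi (0:ℝ))), g t = h t := by
    have hcount : Set.Countable {t : ℝ | ¬ContinuousAt h t} :=
      hhanti.countable_not_continuousAt
    have h1 : ∀ᵐ t ∂(volume.restrict (Ioi (0:ℝ))), t ∉ {t : ℝ | ¬ContinuousAt h t} :=
      ae_restrict_of_ae (hcount.ae_notMem volume)
    filter_upwards [h1, ae_restrict_mem measurableSet_Ioi] with t hcont ht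
    simp only [Set.mem_setOf_eq, not_not] at hcont
    refine le_antisymm (hgle t) ?_
    have htend : Tendsto h (nhdsWithin t (Ioi t)) (nhds (h t)) :=
      (hcont.continuousWithinAt)
    refine le_of_tendsto htend ?_
    filter_upwards [self_mem_nhdsWithin] with s hs
    exact hkey t s (le_of_lt ht) hs
  -- lintegral computation
  have hceq : ∀ n, Choquet ν (F n) Set.univ = ∫⁻ t in Ioi (0:ℝ), H n t := by
    intro n; simp only [Choquet, Set.inter_univ]; rfl
  have hcfeq : Choquet ν f Set.univ = ∫⁻ t in Ioi (0:ℝ), h t := by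
    simp only [Choquet, Set.inter_univ]; rfl
  have hgint : ∫⁻ t in Ioi (0:ℝ), g t = ⨆ n, ∫⁻ t in Ioi (0:ℝ), H n t := by
    rw [← MeasureTheory.lintegral_iSup hHmeas (fun m n hmn t => hHn t hmn)]
    exact lintegral_congr fun t => hgsup t
  have hfinal : ∫⁻ t in Ioi (0:ℝ), h t = ⨆ n, ∫⁻ t in Ioi (0:ℝ), H n t := by
    rw [← hgint]; exact lintegral_congr_ae (hae.mono fun t ht => ht.symm)
  rw [hcfeq, hfinal]
  simp only [hceq]
  exact tendsto_atTop_iSup fun m n hmn =>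
    lintegral_mono fun t => hHn t hmn
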